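/- Let z₀ ∈ ℂ and let f and g be meromorphic in a neighborhood of z₀, each having a zero at z₀, of multiplicities m and m' respectively, with m ≥ 2 and m' ≥ 2. Then the function H := f'/(f−1) − g'/(g−1) is holomorphic at z₀ and vanishes at z₀ to order at least min(m, m') − 1. -/

import Mathlib

open MeasureTheory Filter Set Asymptotics Metric

noncomputable section
open scoped Classical

/-- The order of a meromorphic function at a point, as an integer
(zeros give positive values, poles negative; junk value `0` otherwise). -/
def mord (f : ℂ → ℂ) (z : ℂ) : ℤ :=
  if h : MeromorphicAt f z then WithTop.untopD 0 (meromorphicOrderAt f z) else 0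

/-- The zero divisor `ν⁰_f` of a meromorphic function. -/
def zeroDiv (f : ℂ → ℂ) (z : ℂ) : ℤ := max (mord f z) 0

/-- The pole divisor `ν^∞_f` of a meromorphic function. -/
def poleDiv (f : ℂ → ℂ) (z : ℂ) : ℤ := max (-(mord f z)) 0

/-- The (unintegrated) counting function `n(t, ν)` of a divisor. -/
def couN (ν : ℂ → ℤ) (t : ℝ) : ℝ := ∑ᶠ z ∈ {z : ℂ | ‖z‖ ≤ t}, (ν z : ℝ)

/-- The Nevanlinna counting function `N(r, ν)` of a divisor. -/
def cou (ν : ℂ → ℤ) (r : ℝ) : ℝ := ∫ t in (1:ℝ)..r, couN ν t / t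

/-- The Nevanlinna proximity function `m(r, f)`. -/
def prox (f : ℂ → ℂ) (r : ℝ) : ℝ :=
  (2 * Real.pi)⁻¹ * ∫ θ in (0:ℝ)..(2 * Real.pi),
    max 0 (Real.log ‖f (r * Complex.exp (θ * Complex.I))‖)

/-- The Nevanlinna characteristic function `T(r, f)`. -/
def nevT (f : ℂ → ℂ) (r : ℝ) : ℝ := prox f r + cou (poleDiv f) r

/-- A locally finite (discrete) subset of `ℂ`. -/
def LocFin (S : Set ℂ) : Prop := ∀ t : ℝ, (S ∩ closedBall 0 t).Finite

/-- Equality of meromorphic functions: the two functions agree outside a discrete set. -/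
def MEq (u v : ℂ → ℂ) : Prop := ∃ D : Set ℂ, LocFin D ∧ ∀ z ∉ D, u z = v z

/-- An exceptional set: a Borel subset of `ℝ` of finite Lebesgue measure. -/
def ExcSet (E : Set ℝ) : Prop := MeasurableSet E ∧ volume E < ⊤

/-- `a` is a small function with respect to `f`:
`a` is meromorphic and `‖ T(r,a) = o(T(r,f))`. -/
def SmallFn (a f : ℂ → ℂ) : Prop :=
  MeromorphicOn a Set.univ ∧
    ∃ E : Set ℝ, ExcSet E ∧ nevT a =o[atTop ⊓ 𝓟 Eᶜ] nevT f

/-- `1/(k+1)` for `k : ℕ∞`, with the convention `1/(∞+1) = 0`. -/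
def kinv (k : ℕ∞) : ℝ := ((k + 1).toNat : ℝ)⁻¹

/-- The truncation of a (nonnegative) divisor used in `E^S_{n,k)}(a,f)`:
multiplicities `m ≤ k` are counted `min (m, n+1)` times, multiplicities `m > k`
are disregarded. -/
def truncDiv (n : ℕ) (k : ℕ∞) (ν : ℂ → ℤ) (z : ℂ) : ℤ :=
  if ((ν z).toNat : ℕ∞) ≤ k then min (ν z) (n + 1) else 0

/-- The divisor of `a`-points of `f`, where `a : Option (ℂ → ℂ)` and `none` stands for `∞`. -/
def targDiv (f : ℂ → ℂ) (a : Option (ℂ → ℂ)) : ℂ → ℤ :=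
  fun z =>
    match a with
    | some a => zeroDiv (fun w => f w - a w) z
    | none => poleDiv f z

/-- `f` and `g` weakly share `a` with bi-weight `(n, k)`: there is a discrete set `S`
with `‖ N(r,S) = o(T(r,f)+T(r,g))` outside of which the truncated divisors of
`a`-points of `f` and of `g` agree. -/
def WeaklyShare (f g : ℂ → ℂ) (a : Option (ℂ → ℂ)) (n : ℕ) (k : ℕ∞) : Prop :=
  ∃ S : Set ℂ, LocFin S ∧
    (∃ E : Set ℝ, ExcSet E ∧
      (cou fun z => if z ∈ S then 1 else 0) =o[atTop ⊓ 𝓟 Eᶜ]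
        fun r => nevT f r + nevT g r) ∧
    ∀ z ∉ S, truncDiv n k (targDiv f a) z = truncDiv n k (targDiv g a) z

/-- `f` is a quasi-Möbius transformation of `g`. -/
def QuasiMobius (f g : ℂ → ℂ) : Prop :=
  ∃ a b c d : ℂ → ℂ,
    SmallFn a f ∧ SmallFn b f ∧ SmallFn c f ∧ SmallFn d f ∧
    SmallFn a g ∧ SmallFn b g ∧ SmallFn c g ∧ SmallFn d g ∧
    ¬ MEq (fun z => a z * d z - b z * c z) (fun _ => 0) ∧
    MEq f (fun z => (a z * g z + b z) / (c z * g z + d z))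

/-- `f` is a Möbius transformation of `g`. -/
def Mobius (f g : ℂ → ℂ) : Prop :=
  ∃ a b c d : ℂ, a * d - b * c ≠ 0 ∧
    MEq f (fun z => (a * g z + b) / (c * g z + d))

/-- `f` is a non-constant meromorphic function on `ℂ`. -/
def NonConstMero (f : ℂ → ℂ) : Prop :=
  MeromorphicOn f Set.univ ∧ ¬ ∃ c : ℂ, MEq f (fun _ => c)

/-- The divisor computing `N̄_{(ℓ,k)}(r, ν)`: points with `ℓ ≤ ν(z) ≤ k` counted once. -/
def redTrunc (ℓ : ℕ) (k : ℕ∞) (ν : ℂ → ℤ) (z : ℂ) : ℤ :=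
  if (ℓ : ℤ) ≤ ν z ∧ ((ν z).toNat : ℕ∞) ≤ k then 1 else 0

/-- The reduced divisor `min (ν, 1)` (for nonnegative `ν`). -/
def redDiv (ν : ℂ → ℤ) (z : ℂ) : ℤ := if 0 < ν z then 1 else 0



private lemma analyticAt_deriv' {φ : ℂ → ℂ} {z₀ : ℂ} (hφ : AnalyticAt ℂ φ z₀) :
    AnalyticAt ℂ (deriv φ) z₀ := by
  have h1 : AnalyticAt ℂ ((ContinuousLinearMap.apply ℂ ℂ (1:ℂ)) ∘ (fderiv ℂ φ)) z₀ := by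
    rcases hφ.fderiv with ⟨p, r, hp⟩
    exact ⟨_, r, (ContinuousLinearMap.apply ℂ ℂ (1:ℂ)).comp_hasFPowerSeriesOnBall hp⟩
  exact h1

private lemma le_order_of_factor {F Q : ℂ → ℂ} {z₀ : ℂ} (n : ℕ) (hQ : AnalyticAt ℂ Q z₀)
    (hF : AnalyticAt ℂ F z₀)
    (heq : ∀ᶠ z in nhds z₀, F z = (z - z₀) ^ n * Q z) :
    (n : ℕ∞) ≤ analyticOrderAt F z₀ := by
  rcases eq_or_ne (analyticOrderAt Q z₀) ⊤ with h | h
  · have h0 : ∀ᶠ z in nhds z₀, Q z = 0 := analyticOrderAt_eq_top.mp h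
    have : analyticOrderAt F z₀ = ⊤ := analyticOrderAt_eq_top.mpr <| by
      filter_upwards [heq, h0] with z h1 h2; simp [h1, h2]
    simp [this]
  · obtain ⟨k, hk⟩ := WithTop.ne_top_iff_exists.mp h
    obtain ⟨ρ, hρ, hρ0, hρeq⟩ := (hQ.analyticOrderAt_eq_natCast (n := k)).mp hk.symm
    have : analyticOrderAt F z₀ = ((n + k : ℕ) : ℕ∞) := by
      refine (hF.analyticOrderAt_eq_natCast (n := n + k)).mpr ⟨ρ, hρ, hρ0, ?_⟩
      filter_upwards [heq, hρeq] with z h1 h2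
      simp only [smul_eq_mul] at h2 ⊢
      rw [h1, h2, pow_add]; ring
    rw [this]
    exact_mod_cast Nat.cast_le.mpr (Nat.le_add_right n k)

theorem auxiliary_local_vanishing
    (z₀ : ℂ) (f g : ℂ → ℂ) (m m' : ℕ)
    (hf : AnalyticAt ℂ f z₀) (hg : AnalyticAt ℂ g z₀)
    (hfm : analyticOrderAt f z₀ = (m : ℕ∞)) (hgm : analyticOrderAt g z₀ = (m' : ℕ∞))
    (hm : 2 ≤ m) (hm' : 2 ≤ m') :
    ∃ hH : AnalyticAt ℂ (fun z => deriv f z / (f z - 1) - deriv g z / (g z - 1)) z₀,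
      ((min m m' - 1 : ℕ) : ℕ∞) ≤ analyticOrderAt (fun z => deriv f z / (f z - 1) - deriv g z / (g z - 1)) z₀ := by
  set μ := min m m' with hμdef
  have hμm : μ ≤ m := min_le_left _ _
  have hμm' : μ ≤ m' := min_le_right _ _
  have hμ1 : 1 ≤ μ := by omega
  obtain ⟨φ, hφ, hφ0, hφeq⟩ := (hf.analyticOrderAt_eq_natCast (n := m)).mp hfm
  obtain ⟨ψ, hψ, hψ0, hψeq⟩ := (hg.analyticOrderAt_eq_natCast (n := m')).mp hgm
  simp only [smul_eq_mul] at hφeq hψeq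
  have hfz0 : f z₀ = 0 := by
    have h := hφeq.self_of_nhds
    simp only [sub_self] at h
    rw [h, zero_pow (by omega : m ≠ 0), zero_mul]
  have hgz0 : g z₀ = 0 := by
    have h := hψeq.self_of_nhds
    simp only [sub_self] at h
    rw [h, zero_pow (by omega : m' ≠ 0), zero_mul]
  have hf1 : f z₀ - 1 ≠ 0 := by rw [hfz0]; norm_num
  have hg1 : g z₀ - 1 ≠ 0 := by rw [hgz0]; norm_num
  have hdf : ∀ᶠ z in nhds z₀,
      deriv f z = (z - z₀) ^ (m - 1) * ((m : ℂ) * φ z + (z - z₀) * deriv φ z) := by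
    have h1 : deriv f =ᶠ[nhds z₀] deriv (fun z => (z - z₀) ^ m * φ z) :=
      Filter.EventuallyEq.deriv hφeq
    filter_upwards [h1, hφ.eventually_analyticAt] with z h2 h3
    rw [h2]
    have hd : HasDerivAt (fun z => (z - z₀) ^ m * φ z)
        ((m : ℂ) * (z - z₀) ^ (m - 1) * 1 * φ z + (z - z₀) ^ m * deriv φ z) z :=
      (((hasDerivAt_id z).sub_const z₀).pow m).mul h3.differentiableAt.hasDerivAt
    rw [hd.deriv, show (z - z₀) ^ m = (z - z₀) ^ (m - 1) * (z - z₀) by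
      conv_lhs => rw [show m = (m - 1) + 1 by omega]
      rw [pow_succ]]
    ring
  have hdg : ∀ᶠ z in nhds z₀,
      deriv g z = (z - z₀) ^ (m' - 1) * ((m' : ℂ) * ψ z + (z - z₀) * deriv ψ z) := by
    have h1 : deriv g =ᶠ[nhds z₀] deriv (fun z => (z - z₀) ^ m' * ψ z) :=
      Filter.EventuallyEq.deriv hψeq
    filter_upwards [h1, hψ.eventually_analyticAt] with z h2 h3
    rw [h2]
    have hd : HasDerivAt (fun z => (z - z₀) ^ m' * ψ z)
        ((m' : ℂ) * (z - z₀) ^ (m' - 1) * 1 * ψ z + (z - z₀) ^ m' * deriv ψ z) z :=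
      (((hasDerivAt_id z).sub_const z₀).pow m').mul h3.differentiableAt.hasDerivAt
    rw [hd.deriv, show (z - z₀) ^ m' = (z - z₀) ^ (m' - 1) * (z - z₀) by
      conv_lhs => rw [show m' = (m' - 1) + 1 by omega]
      rw [pow_succ]]
    ring
  have hid : AnalyticAt ℂ (fun z => z - z₀) z₀ :=
    (analyticAt_id).sub analyticAt_const
  set Q : ℂ → ℂ := fun z =>
    (z - z₀) ^ (m - μ) * (((m : ℂ) * φ z + (z - z₀) * deriv φ z) / (f z - 1)) -
    (z - z₀) ^ (m' - μ) * (((m' : ℂ) * ψ z + (z - z₀) * deriv ψ z) / (g z - 1)) with hQdef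
  have hQ : AnalyticAt ℂ Q z₀ := by
    apply AnalyticAt.sub
    · exact (hid.pow _).mul
        (((analyticAt_const.mul hφ).add (hid.mul (analyticAt_deriv' hφ))).div
          (hf.sub analyticAt_const) hf1)
    · exact (hid.pow _).mul
        (((analyticAt_const.mul hψ).add (hid.mul (analyticAt_deriv' hψ))).div
          (hg.sub analyticAt_const) hg1)
  have key : ∀ᶠ z in nhds z₀,
      deriv f z / (f z - 1) - deriv g z / (g z - 1) = (z - z₀) ^ (μ - 1) * Q z := by
    filter_upwards [hdf, hdg] with z h1 h2
    rw [h1, h2, hQdef]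
    rw [show m - 1 = (μ - 1) + (m - μ) by omega, show m' - 1 = (μ - 1) + (m' - μ) by omega,
      pow_add, pow_add]
    ring
  have hH : AnalyticAt ℂ (fun z => deriv f z / (f z - 1) - deriv g z / (g z - 1)) z₀ :=
    (((hid.pow (μ - 1)).mul hQ).congr (Filter.EventuallyEq.symm key))
  exact ⟨hH, le_order_of_factor (μ - 1) hQ hH key⟩


end
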